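/- The stabilizer subgroup {g ∈ PGL(3,k) : g(P²(F₄)) = P²(F₄)} of the 21-point set P²(F₄) under the natural action of PGL(3,k) on P²(k) is equal to the image of GL(3,F₄) in PGL(3,k), i.e. to PGL(3,F₄). -/

import Mathlib

/-- The natural action of an invertible matrix `g ∈ GL(3,k)` on the projective plane
`P²(k)`. -/
noncomputable def actGL (k : Type*) [Field k] (g : Matrix.GeneralLinearGroup (Fin 3) k) :
    Projectivization k (Fin 3 → k) → Projectivization k (Fin 3 → k) := fun P =>
  Projectivization.mk k ((g : Matrix (Fin 3) (Fin 3) k).mulVec P.rep) (by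
    intro h
    apply P.rep_nonzero
    have h2 : ((g⁻¹ : Matrix.GeneralLinearGroup (Fin 3) k) : Matrix (Fin 3) (Fin 3) k).mulVec
        (((g : Matrix (Fin 3) (Fin 3) k)).mulVec P.rep) = P.rep := by
      rw [Matrix.mulVec_mulVec, g.inv_mul, Matrix.one_mulVec]
    rw [h, Matrix.mulVec_zero] at h2
    exact h2.symm)

/-- `PGL(3,k)`: the quotient of `GL(3,k)` by its center (the nonzero scalar matrices). -/
abbrev PGL3 (k : Type*) [Field k] : Type _ :=
  Matrix.GeneralLinearGroup (Fin 3) k ⧸ Subgroup.center (Matrix.GeneralLinearGroup (Fin 3) k)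

/-- The set `P²(F₄)` of points of `P²(k)` admitting homogeneous coordinates all lying in
the four-element subfield `F₄ = {0, 1, ω, ω+1}` of `k`. -/
def P2F4 (k : Type*) [Field k] (ω : k) : Set (Projectivization k (Fin 3 → k)) :=
  {P | ∃ v : Fin 3 → k, (∀ i, v i ∈ ({0, 1, ω, ω + 1} : Set k)) ∧
    ∃ hv : v ≠ 0, P = Projectivization.mk k v hv}

/-- The stabilizer of a subset `Z ⊆ P²(k)` in `PGL(3,k)`: the elements of `PGL(3,k)` all of
whose lifts to `GL(3,k)` map `Z` onto itself. -/
def PGLstab (k : Type*) [Field k] (Z : Set (Projectivization k (Fin 3 → k))) : Set (PGL3 k) :=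
  {x | ∀ g : Matrix.GeneralLinearGroup (Fin 3) k, QuotientGroup.mk g = x → actGL k g '' Z = Z}

section AuxStab

set_option linter.unusedSectionVars false


variable {k : Type*} [Field k] [CharP k 2]

/-- The subfield `F₄ = {0,1,ω,ω+1}` of `k`. -/
def F4sub (ω : k) (hω : ω ^ 2 + ω + 1 = 0) : Subfield k where
  carrier := {0, 1, ω, ω + 1}
  zero_mem' := by left; rfl
  one_mem' := by right; left; rfl
  add_mem' := by
    have h2 : (2 : k) = 0 := by exact_mod_cast CharP.cast_eq_zero k 2
    rintro a b ha hb
    simp only [Set.mem_insert_iff, Set.mem_singleton_iff] at ha hb ⊢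
    rcases ha with ha | ha | ha | ha <;> rcases hb with hb | hb | hb | hb <;> rw [ha, hb]
    · left; ring
    · right; left; ring
    · right; right; left; ring
    · right; right; right; ring
    · right; left; ring
    · left; linear_combination h2
    · right; right; right; ring
    · right; right; left; linear_combination h2
    · right; right; left; ring
    · right; right; right; ring
    · left; linear_combination ω * h2
    · right; left; linear_combination ω * h2
    · right; right; right; ring
    · right; right; left; linear_combination h2
    · right; left; linear_combination ω * h2
    · left; linear_combination (ω + 1) * h2
  mul_mem' := by
    have h2 : (2 : k) = 0 := by exact_mod_cast CharP.cast_eq_zero k 2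
    rintro a b ha hb
    simp only [Set.mem_insert_iff, Set.mem_singleton_iff] at ha hb ⊢
    rcases ha with ha | ha | ha | ha <;> rcases hb with hb | hb | hb | hb <;> rw [ha, hb]
    · left; ring
    · left; ring
    · left; ring
    · left; ring
    · left; ring
    · right; left; ring
    · right; right; left; ring
    · right; right; right; ring
    · left; ring
    · right; right; left; ring
    · right; right; right; linear_combination hω - (ω + 1) * h2
    · right; left; linear_combination hω - h2
    · left; ring
    · right; right; right; ring
    · right; left; linear_combination hω - h2
    · right; right; left; linear_combination hω
  neg_mem' := by
    have h2 : (2 : k) = 0 := by exact_mod_cast CharP.cast_eq_zero k 2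
    rintro a ha
    simp only [Set.mem_insert_iff, Set.mem_singleton_iff] at ha ⊢
    rcases ha with ha | ha | ha | ha <;> rw [ha]
    · left; ring
    · right; left; linear_combination -h2
    · right; right; left; linear_combination -ω * h2
    · right; right; right; linear_combination -(ω + 1) * h2
  inv_mem' := by
    have h2 : (2 : k) = 0 := by exact_mod_cast CharP.cast_eq_zero k 2
    have hω0 : ω ≠ 0 := by
      rintro rfl; simp at hω
    have hω1 : ω + 1 ≠ 0 := by
      intro h
      have h1 : ω = 1 := by linear_combination h - h2
      rw [h1] at hω
      have : (1 : k) = 0 := by linear_combination hω - h2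
      exact one_ne_zero this
    rintro a ha
    simp only [Set.mem_insert_iff, Set.mem_singleton_iff] at ha ⊢
    rcases ha with ha | ha | ha | ha <;> rw [ha]
    · left; simp
    · right; left; simp
    · right; right; right
      field_simp
      linear_combination -hω + h2
    · right; right; left
      field_simp
      linear_combination -hω + h2

section Aux

variable (F : Subfield k)

lemma det_mem_subfield {M : Matrix (Fin 3) (Fin 3) k} (h : ∀ i j, M i j ∈ F) :
    M.det ∈ F := by
  set M' : Matrix (Fin 3) (Fin 3) F := Matrix.of fun i j => (⟨M i j, h i j⟩ : F) with hM'
  have hmap : F.subtype.mapMatrix M' = M := by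
    ext i j; rfl
  have := RingHom.map_det F.subtype M'
  rw [hmap] at this
  rw [← this]
  exact (M'.det).2

lemma inv_mem_subfield {M : Matrix (Fin 3) (Fin 3) k} (h : ∀ i j, M i j ∈ F) (i j : Fin 3) :
    M⁻¹ i j ∈ F := by
  set M' : Matrix (Fin 3) (Fin 3) F := Matrix.of fun i j => (⟨M i j, h i j⟩ : F) with hM'
  have hmap : F.subtype.mapMatrix M' = M := by
    ext i j; rfl
  have hadj := RingHom.map_adjugate F.subtype M'
  rw [hmap] at hadj
  rw [Matrix.inv_def, Matrix.smul_apply, smul_eq_mul]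
  refine F.mul_mem ?_ ?_
  · rw [Ring.inverse_eq_inv']
    exact F.inv_mem (det_mem_subfield F h)
  · rw [← hadj]
    exact (M'.adjugate i j).2

lemma mulVec_mem_subfield {M : Matrix (Fin 3) (Fin 3) k} {v : Fin 3 → k}
    (hM : ∀ i j, M i j ∈ F) (hv : ∀ i, v i ∈ F) (i : Fin 3) : M.mulVec v i ∈ F := by
  simp only [Matrix.mulVec, dotProduct]
  exact Subfield.sum_mem F (fun j _ => F.mul_mem (hM i j) (hv j))

end Aux

section Act

open Projectivization

lemma mulVec_ne_zero (g : Matrix.GeneralLinearGroup (Fin 3) k) {v : Fin 3 → k} (hv : v ≠ 0) :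
    (g : Matrix (Fin 3) (Fin 3) k).mulVec v ≠ 0 := by
  intro h
  apply hv
  have h2 : ((g⁻¹ : Matrix.GeneralLinearGroup (Fin 3) k) : Matrix (Fin 3) (Fin 3) k).mulVec
      (((g : Matrix (Fin 3) (Fin 3) k)).mulVec v) = v := by
    rw [Matrix.mulVec_mulVec, g.inv_mul, Matrix.one_mulVec]
  rw [h, Matrix.mulVec_zero] at h2
  exact h2.symm

lemma actGL_mk (g : Matrix.GeneralLinearGroup (Fin 3) k) {v : Fin 3 → k} (hv : v ≠ 0) :
    actGL k g (Projectivization.mk k v hv) =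
      Projectivization.mk k ((g : Matrix (Fin 3) (Fin 3) k).mulVec v) (mulVec_ne_zero g hv) := by
  unfold actGL
  rw [Projectivization.mk_eq_mk_iff]
  have h1 := Projectivization.mk_rep (Projectivization.mk k v hv)
  rw [Projectivization.mk_eq_mk_iff] at h1
  obtain ⟨a, ha⟩ := h1
  refine ⟨a, ?_⟩
  rw [← ha, ← Matrix.mulVec_smul]

lemma mk_congr {u w : Fin 3 → k} (h : u = w) (hu : u ≠ 0) (hw : w ≠ 0) :
    Projectivization.mk k u hu = Projectivization.mk k w hw := by subst h; rfl

lemma actGL_actGL (g g' : Matrix.GeneralLinearGroup (Fin 3) k)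
    (P : Projectivization k (Fin 3 → k)) :
    actGL k g (actGL k g' P) = actGL k (g * g') P := by
  rw [← Projectivization.mk_rep P, actGL_mk, actGL_mk, actGL_mk]
  exact mk_congr (by rw [Matrix.mulVec_mulVec, Units.val_mul]) _ _

lemma actGL_smul_eq (g g' : Matrix.GeneralLinearGroup (Fin 3) k) (r : k)
    (hr : (g' : Matrix (Fin 3) (Fin 3) k) = r • (g : Matrix (Fin 3) (Fin 3) k)) :
    actGL k g' = actGL k g := by
  funext P
  rw [← Projectivization.mk_rep P, actGL_mk, actGL_mk]
  rw [Projectivization.mk_eq_mk_iff']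
  refine ⟨r, ?_⟩
  rw [hr, Matrix.smul_mulVec]

end Act

lemma center_scalar (z : Matrix.GeneralLinearGroup (Fin 3) k)
    (hz : z ∈ Subgroup.center (Matrix.GeneralLinearGroup (Fin 3) k)) :
    ∃ r : k, r ≠ 0 ∧ (z : Matrix (Fin 3) (Fin 3) k) = r • (1 : Matrix (Fin 3) (Fin 3) k) := by
  have hcomm : ∀ i j : Fin 3, i ≠ j →
      Commute (Matrix.single i j (1:k)) (z : Matrix (Fin 3) (Fin 3) k) := by
    intro i j hij
    set E := Matrix.single i j (1:k) with hE
    have hE2 : E * E = 0 := by rw [hE]; simp [Ne.symm hij]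
    have hTinv : (1 + E) * (1 - E) = 1 := by
      rw [add_mul, mul_sub, mul_sub, one_mul, one_mul, mul_one, hE2]
      abel
    have hTinv' : (1 - E) * (1 + E) = 1 := by
      rw [sub_mul, mul_add, mul_add, one_mul, one_mul, mul_one, hE2]
      abel
    set T : Matrix.GeneralLinearGroup (Fin 3) k := ⟨1 + E, 1 - E, hTinv, hTinv'⟩ with hT
    have hc := Subgroup.mem_center_iff.1 hz T
    have hc' : ((T * z : Matrix.GeneralLinearGroup (Fin 3) k) : Matrix (Fin 3) (Fin 3) k)
        = ((z * T : Matrix.GeneralLinearGroup (Fin 3) k) : Matrix (Fin 3) (Fin 3) k) := by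
      rw [hc]
    rw [Units.val_mul, Units.val_mul] at hc'
    have : (1 + E) * (z : Matrix (Fin 3) (Fin 3) k) = (z : Matrix (Fin 3) (Fin 3) k) * (1 + E) :=
      hc'
    rw [add_mul, mul_add, one_mul, mul_one] at this
    exact add_left_cancel this
  obtain ⟨r, hr⟩ := Matrix.mem_range_scalar_iff_commute_single.2 hcomm
  have hzr : (z : Matrix (Fin 3) (Fin 3) k) = r • (1 : Matrix (Fin 3) (Fin 3) k) := by
    rw [← hr, Matrix.scalar_apply]
    ext a b
    by_cases h : a = b <;>
      simp [Matrix.diagonal_apply, Matrix.one_apply, h]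
  refine ⟨r, ?_, hzr⟩
  intro hr0
  rw [hr0, zero_smul] at hzr
  have hmul : (z : Matrix (Fin 3) (Fin 3) k) * ((z⁻¹ : Matrix.GeneralLinearGroup (Fin 3) k) :
      Matrix (Fin 3) (Fin 3) k) = 1 := z.mul_inv
  rw [hzr, zero_mul] at hmul
  have h00 : (0 : Matrix (Fin 3) (Fin 3) k) 0 0 = (1 : Matrix (Fin 3) (Fin 3) k) 0 0 := by
    rw [hmul]
  simp [Matrix.one_apply] at h00

lemma mem_F4sub (ω : k) (hω : ω ^ 2 + ω + 1 = 0) (x : k) :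
    x ∈ F4sub ω hω ↔ x ∈ ({0, 1, ω, ω + 1} : Set k) := Iff.rfl

lemma image_P2F4_eq (ω : k) (hω : ω ^ 2 + ω + 1 = 0) (g : Matrix.GeneralLinearGroup (Fin 3) k)
    (hgS : ∀ i j : Fin 3, (g : Matrix (Fin 3) (Fin 3) k) i j ∈ ({0, 1, ω, ω + 1} : Set k)) :
    actGL k g '' P2F4 k ω = P2F4 k ω := by
  set F := F4sub ω hω with hF
  have hgF : ∀ i j : Fin 3, (g : Matrix (Fin 3) (Fin 3) k) i j ∈ F := hgS
  have hinto : ∀ g' : Matrix.GeneralLinearGroup (Fin 3) k,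
      (∀ i j : Fin 3, (g' : Matrix (Fin 3) (Fin 3) k) i j ∈ F) →
      ∀ P ∈ P2F4 k ω, actGL k g' P ∈ P2F4 k ω := by
    rintro g' hg'F P ⟨v, hvS, hv, rfl⟩
    rw [actGL_mk]
    exact ⟨(g' : Matrix (Fin 3) (Fin 3) k).mulVec v,
      fun i => mulVec_mem_subfield F hg'F hvS i, mulVec_ne_zero g' hv, rfl⟩
  have hginvF : ∀ i j : Fin 3, ((g⁻¹ : Matrix.GeneralLinearGroup (Fin 3) k) :
      Matrix (Fin 3) (Fin 3) k) i j ∈ F := by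
    have hval : ((g⁻¹ : Matrix.GeneralLinearGroup (Fin 3) k) : Matrix (Fin 3) (Fin 3) k) =
        ((g : Matrix (Fin 3) (Fin 3) k))⁻¹ := by
      refine (Matrix.inv_eq_left_inv ?_).symm
      exact g.inv_mul
    rw [hval]
    exact fun i j => inv_mem_subfield F hgF i j
  apply Set.Subset.antisymm
  · rintro _ ⟨P, hP, rfl⟩
    exact hinto g hgF P hP
  · intro P hP
    refine ⟨actGL k g⁻¹ P, hinto g⁻¹ hginvF P hP, ?_⟩
    rw [actGL_actGL, mul_inv_cancel]
    rw [← Projectivization.mk_rep P, actGL_mk]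
    exact mk_congr (by rw [Units.val_one, Matrix.one_mulVec]) _ _

theorem stabilizer_P2F4' (ω : k) (hω : ω ^ 2 + ω + 1 = 0) :
    PGLstab k (P2F4 k ω) =
      {x : PGL3 k | ∃ g : Matrix.GeneralLinearGroup (Fin 3) k,
        (∀ i j : Fin 3, (g : Matrix (Fin 3) (Fin 3) k) i j ∈ ({0, 1, ω, ω + 1} : Set k)) ∧
        QuotientGroup.mk g = x} := by
  ext x
  constructor
  · intro hx
    obtain ⟨g, hgx⟩ := QuotientGroup.mk_surjective x
    have hg := hx g hgx
    set F := F4sub ω hω with hF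
    have hone : ∀ i : Fin 3, (Pi.single i (1:k) : Fin 3 → k) ≠ 0 := by
      intro i h
      have h' := congrFun h i
      simp at h'
    have honev : (fun _ => (1:k) : Fin 3 → k) ≠ 0 := by
      intro h
      have h' := congrFun h 0
      simp at h'
    have key : ∀ (v : Fin 3 → k) (hv : v ≠ 0), (∀ i, v i ∈ F) →
        ∃ (w : Fin 3 → k) (c : kˣ), (∀ i, w i ∈ F) ∧ w ≠ 0 ∧
          (c : k) • w = (g : Matrix (Fin 3) (Fin 3) k).mulVec v := by
      intro v hv hvF
      have hmem : Projectivization.mk k v hv ∈ P2F4 k ω := ⟨v, hvF, hv, rfl⟩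
      have himg : actGL k g (Projectivization.mk k v hv) ∈ P2F4 k ω := by
        rw [← hg]; exact Set.mem_image_of_mem _ hmem
      rw [actGL_mk] at himg
      obtain ⟨w, hwS, hw, heq⟩ := himg
      rw [Projectivization.mk_eq_mk_iff] at heq
      obtain ⟨cu, hc⟩ := heq
      exact ⟨w, cu, hwS, hw, by rw [← Units.smul_def]; exact hc⟩
    have hsF : ∀ i : Fin 3, ∀ j, (Pi.single i (1:k) : Fin 3 → k) j ∈ F := by
      intro i j
      by_cases h : j = i
      · rw [h]; simp only [Pi.single_eq_same]; exact F.one_mem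
      · rw [Pi.single_eq_of_ne h]; exact F.zero_mem
    choose v c hvS hvne hvc using fun i : Fin 3 => key (Pi.single i 1) (hone i) (hsF i)
    obtain ⟨w, c3, hwS, hwne, hwc⟩ := key (fun _ => 1) honev (fun i => F.one_mem)
    have hentry : ∀ r s : Fin 3, (g : Matrix (Fin 3) (Fin 3) k) r s = (c s : k) * v s r := by
      intro r s
      have h1 := congrFun (hvc s) r
      simp only [Matrix.mulVec_single_one, Matrix.col_apply, mul_one, Pi.smul_apply, smul_eq_mul] at h1
      exact h1.symm
    set V : Matrix (Fin 3) (Fin 3) k := Matrix.of fun r s => v s r with hVdef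
    have hgV : (g : Matrix (Fin 3) (Fin 3) k) = V * Matrix.diagonal (fun s => (c s : k)) := by
      ext r s
      rw [Matrix.mul_diagonal]
      show (g : Matrix (Fin 3) (Fin 3) k) r s = v s r * (c s : k)
      rw [hentry r s, mul_comm]
    have hdetg : IsUnit ((g : Matrix (Fin 3) (Fin 3) k)).det :=
      (Matrix.isUnit_iff_isUnit_det _).1 g.isUnit
    have hdetV : V.det ≠ 0 := by
      intro h0
      apply hdetg.ne_zero
      rw [hgV, Matrix.det_mul, h0, zero_mul]
    have hVS : ∀ r s, V r s ∈ F := fun r s => hvS s r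
    have hVinv : ∀ r s, V⁻¹ r s ∈ F := inv_mem_subfield F hVS
    set a : Fin 3 → k := V⁻¹.mulVec w with hadef
    have haS : ∀ i, a i ∈ F := mulVec_mem_subfield F hVinv hwS
    have hVa : V.mulVec a = w := by
      rw [hadef, Matrix.mulVec_mulVec, Matrix.mul_nonsing_inv _ (isUnit_iff_ne_zero.2 hdetV),
        Matrix.one_mulVec]
    have hmain : (g : Matrix (Fin 3) (Fin 3) k).mulVec (fun _ => 1) =
        V.mulVec (fun s => (c s : k)) := by
      have hd : (Matrix.diagonal fun s => (c s : k)).mulVec (fun _ => 1) =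
          fun s => (c s : k) := by
        funext s
        rw [Matrix.mulVec_diagonal]
        exact mul_one _
      rw [hgV, ← Matrix.mulVec_mulVec, hd]
    have hceq : (fun s => (c s : k)) = (c3 : k) • a := by
      have h1 : V.mulVec (fun s => (c s : k)) = V.mulVec ((c3 : k) • a) := by
        rw [Matrix.mulVec_smul, hVa, ← hmain, ← hwc]
      have h2 := congrArg (fun u => V⁻¹.mulVec u) h1
      simpa [Matrix.mulVec_mulVec, Matrix.nonsing_inv_mul _ (isUnit_iff_ne_zero.2 hdetV),
        Matrix.one_mulVec] using h2
    set h : Matrix (Fin 3) (Fin 3) k := Matrix.of fun r s => a s * v s r with hhdef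
    have hgh : (g : Matrix (Fin 3) (Fin 3) k) = (c3 : k) • h := by
      ext r s
      show (g : Matrix (Fin 3) (Fin 3) k) r s = (c3 : k) * (a s * v s r)
      rw [hentry r s]
      have h3 := congrFun hceq s
      simp only [Pi.smul_apply, smul_eq_mul] at h3
      rw [h3, mul_assoc]
    have hdeth : h.det ≠ 0 := by
      intro h0
      apply hdetg.ne_zero
      rw [hgh, Matrix.det_smul, h0, mul_zero]
    set h' : Matrix.GeneralLinearGroup (Fin 3) k :=
      Matrix.GeneralLinearGroup.mkOfDetNeZero h hdeth with hh'def
    have hh'val : (h' : Matrix (Fin 3) (Fin 3) k) = h := rfl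
    have hS' : ∀ i j : Fin 3, (h' : Matrix (Fin 3) (Fin 3) k) i j ∈
        ({0, 1, ω, ω + 1} : Set k) := by
      intro i j
      rw [hh'val]
      exact F.mul_mem (haS j) (hvS j i)
    set z : Matrix.GeneralLinearGroup (Fin 3) k :=
      Units.map (algebraMap k (Matrix (Fin 3) (Fin 3) k)).toMonoidHom c3 with hzdef
    have hzval : (z : Matrix (Fin 3) (Fin 3) k) = (c3 : k) • 1 := by
      rw [hzdef]
      show algebraMap k (Matrix (Fin 3) (Fin 3) k) (c3 : k) = (c3 : k) • 1
      rw [Algebra.algebraMap_eq_smul_one]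
    have hguh : g = z * h' := by
      apply Units.ext
      show (g : Matrix (Fin 3) (Fin 3) k) =
        (z : Matrix (Fin 3) (Fin 3) k) * (h' : Matrix (Fin 3) (Fin 3) k)
      rw [hzval, hh'val, hgh, smul_mul_assoc, one_mul]
    have hz : z ∈ Subgroup.center (Matrix.GeneralLinearGroup (Fin 3) k) := by
      refine Subgroup.mem_center_iff.2 fun b => Units.ext ?_
      show (b : Matrix (Fin 3) (Fin 3) k) * (z : Matrix (Fin 3) (Fin 3) k) =
        (z : Matrix (Fin 3) (Fin 3) k) * (b : Matrix (Fin 3) (Fin 3) k)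
      rw [hzval, smul_mul_assoc, mul_smul_comm, one_mul, mul_one]
    refine ⟨h', hS', ?_⟩
    rw [← hgx, hguh, QuotientGroup.mk_mul, (QuotientGroup.eq_one_iff z).2 hz, one_mul]
  · rintro ⟨g, hgS, rfl⟩
    intro g' hg'
    rw [QuotientGroup.eq] at hg'
    have hzc : (g'⁻¹ * g)⁻¹ ∈ Subgroup.center (Matrix.GeneralLinearGroup (Fin 3) k) :=
      (Subgroup.center (Matrix.GeneralLinearGroup (Fin 3) k)).inv_mem hg'
    obtain ⟨r, hr0, hrval⟩ := center_scalar _ hzc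
    have hg'val : (g' : Matrix (Fin 3) (Fin 3) k) = r • (g : Matrix (Fin 3) (Fin 3) k) := by
      have hgg : g' = g * (g'⁻¹ * g)⁻¹ := by group
      rw [hgg, Units.val_mul, hrval, mul_smul_comm, mul_one]
    rw [actGL_smul_eq g g' r hg'val]
    exact image_P2F4_eq ω hω g hgS

end AuxStab

/-- the stabilizer in `PGL(3,k)` of the 21-point set `P²(F₄)` is the image in
`PGL(3,k)` of `GL(3,F₄)`, i.e. of the invertible matrices all of whose entries lie in the
subfield `F₄ = {0, 1, ω, ω+1}` of `k`. -/
theorem stabilizer_P2F4 (k : Type*) [Field k] [IsAlgClosed k] [CharP k 2]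
    (ω : k) (hω : ω ^ 2 + ω + 1 = 0) :
    PGLstab k (P2F4 k ω) =
      {x : PGL3 k | ∃ g : Matrix.GeneralLinearGroup (Fin 3) k,
        (∀ i j : Fin 3, (g : Matrix (Fin 3) (Fin 3) k) i j ∈ ({0, 1, ω, ω + 1} : Set k)) ∧
        QuotientGroup.mk g = x} :=
  stabilizer_P2F4' ω hω
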